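/- Let G be a finite group acting as a collineation group on a projective plane of order n with a flag-orbit of size n³. If B is the stabilizer of a line in a flag of that orbit and A the stabilizer of the point, then |G : B| = n², |B : A∩B| = n, and |G| = n³·|A∩B|. -/

import Mathlib

open scoped Pointwise

lemma arith_aux (n a b : ℕ) (hn : 1 < n) (hab : b * a = n ^ 3)
    (hb : b ≤ n + 1) (ha : a ≤ n ^ 2 + n + 1) : b = n ∧ a = n ^ 2 := by
  have hbn : n ≤ b := by
    by_contra h
    push_neg at h
    have h1 : b * a ≤ (n - 1) * (n ^ 2 + n + 1) :=
      Nat.mul_le_mul (by omega) ha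
    have h2 : (n - 1) * (n ^ 2 + n + 1) < n ^ 3 := by
      rcases Nat.exists_eq_add_of_lt hn with ⟨m, rfl⟩
      have : (1 + m + 1 - 1) = m + 1 := by omega
      rw [this]
      ring_nf
      nlinarith
    omega
  have hbne : b ≠ n + 1 := by
    intro h
    subst h
    have h1 : ((n : ℤ) + 1) ∣ (n : ℤ) ^ 3 := ⟨a, by exact_mod_cast hab.symm⟩
    have h2 : ((n : ℤ) + 1) ∣ (n : ℤ) ^ 3 + 1 := ⟨(n : ℤ) ^ 2 - n + 1, by ring⟩
    have h3 : ((n : ℤ) + 1) ∣ 1 := by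
      have := dvd_sub h2 h1
      simpa using this
    have h4 := Int.le_of_dvd one_pos h3
    have : (1 : ℤ) < n := by exact_mod_cast hn
    omega
  have hbn' : b = n := by omega
  subst hbn'
  refine ⟨rfl, Nat.eq_of_mul_eq_mul_left (show 0 < b by omega) ?_⟩
  rw [hab]; ring

/-- If a finite group `G` acts on a projective plane of order `n` with a flag-orbit
of size `n³`, and `A`, `B` are the stabilizers of the point and line of a flag in that
orbit, then `|G : B| = n²`, `|B : A ∩ B| = n`, and `|G| = n³·|A ∩ B|`. -/
theorem stmt11 {G P L : Type*} [Group G] [Finite G] [Finite P] [Finite L]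
    [MulAction G P] [MulAction G L]
    (incid : P → L → Prop) (n : ℕ) (hn : 1 < n)
    (hpts : Nat.card P = n ^ 2 + n + 1) (hlns : Nat.card L = n ^ 2 + n + 1)
    (hline : ∀ l : L, Nat.card {p : P // incid p l} = n + 1)
    (hpoint : ∀ p : P, Nat.card {l : L // incid p l} = n + 1)
    (huniq : ∀ p q : P, p ≠ q → ∃! l : L, incid p l ∧ incid q l)
    (hpres : ∀ (g : G) (p : P) (l : L), incid (g • p) (g • l) ↔ incid p l)
    (p₀ : P) (l₀ : L) (hflag : incid p₀ l₀)
    (horbit : Nat.card (MulAction.orbit G ((p₀, l₀) : P × L)) = n ^ 3) :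
    (MulAction.stabilizer G l₀).index = n ^ 2 ∧
    (MulAction.stabilizer G p₀).relIndex (MulAction.stabilizer G l₀) = n ∧
    Nat.card G = n ^ 3 *
      Nat.card (MulAction.stabilizer G p₀ ⊓ MulAction.stabilizer G l₀ : Subgroup G) := by
  set A := MulAction.stabilizer G p₀ with hA
  set B := MulAction.stabilizer G l₀ with hB
  -- the stabilizer of the flag is A ⊓ B
  have hstab : MulAction.stabilizer G ((p₀, l₀) : P × L) = A ⊓ B := by
    ext g
    simp [MulAction.mem_stabilizer_iff, Subgroup.mem_inf, Prod.ext_iff, hA, hB]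
  -- its index is n³
  have hidx : (A ⊓ B).index = n ^ 3 := by
    rw [← hstab, MulAction.index_stabilizer, ← Nat.card_coe_set_eq, horbit]
  -- relindex * index = n³
  have hmul : A.relIndex B * B.index = n ^ 3 := by
    rw [← Subgroup.inf_relIndex_right, Subgroup.relIndex_mul_index inf_le_right, hidx]
  -- index of B ≤ number of lines
  have ha : B.index ≤ n ^ 2 + n + 1 := by
    rw [MulAction.index_stabilizer]
    calc (MulAction.orbit G l₀).ncard ≤ (Set.univ : Set L).ncard :=
          Set.ncard_le_ncard (Set.subset_univ _) Set.finite_univ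
      _ = n ^ 2 + n + 1 := by rw [Set.ncard_univ, hlns]
  -- relindex A B ≤ n + 1
  have hb : A.relIndex B ≤ n + 1 := by
    have hsb : MulAction.stabilizer B p₀ = A.subgroupOf B := by
      ext g
      simp only [MulAction.mem_stabilizer_iff, Subgroup.mem_subgroupOf, hA]
      rfl
    have h1 : A.relIndex B = (MulAction.orbit B p₀).ncard := by
      rw [Subgroup.relIndex, ← hsb, MulAction.index_stabilizer]
    have hsub : MulAction.orbit B p₀ ⊆ {p : P | incid p l₀} := by
      rintro p ⟨b, rfl⟩
      have hb' : (b : G) • l₀ = l₀ := b.2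
      have := (hpres (b : G) p₀ l₀).mpr hflag
      rw [hb'] at this
      exact this
    have h2 : (MulAction.orbit B p₀).ncard ≤ ({p : P | incid p l₀} : Set P).ncard :=
      Set.ncard_le_ncard hsub (Set.toFinite _)
    have h3 : ({p : P | incid p l₀} : Set P).ncard = n + 1 := by
      rw [← Nat.card_coe_set_eq]
      exact hline l₀
    omega
  obtain ⟨hb', ha'⟩ := arith_aux n B.index (A.relIndex B) hn hmul hb ha
  refine ⟨ha', hb', ?_⟩
  rw [← Subgroup.index_mul_card (A ⊓ B), hidx]
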